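/- Let d, m, C, z be real numbers with 0 < d < m, C ≥ 1, and 0 < z ≤ C·log(2)·m/d. Then (1 − (1 − d/m)^z)/z ≥ d/(2·C·log(2)·m). -/

import Mathlib

open Real

theorem stmt9 (d m C z : ℝ) (hd : 0 < d) (hdm : d < m) (hC : 1 ≤ C)
    (hz0 : 0 < z) (hz : z ≤ C * Real.log 2 * m / d) :
    (1 - (1 - d / m) ^ z) / z ≥ d / (2 * C * Real.log 2 * m) := by
  have hm : (0:ℝ) < m := hd.trans hdm
  have hlog2 : (0:ℝ) < Real.log 2 := Real.log_pos (by norm_num)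
  set L := C * Real.log 2 with hLdef
  have hL : Real.log 2 ≤ L := by nlinarith
  have hLpos : 0 < L := hlog2.trans_le hL
  set t := z * (d / m) with htdef
  have ht0 : 0 < t := by positivity
  have htL : t ≤ L := by
    rw [htdef]
    calc z * (d / m) ≤ (L * m / d) * (d / m) :=
          mul_le_mul_of_nonneg_right hz (by positivity)
      _ = L := by field_simp
  have ha0 : 0 < 1 - d / m := by
    have : d / m < 1 := (div_lt_one hm).mpr hdm
    linarith
  -- Step 1: (1 - d/m)^z ≤ exp(-t)
  have hloga : Real.log (1 - d / m) ≤ -(d / m) := by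
    have := Real.log_le_sub_one_of_pos ha0
    linarith
  have h1 : (1 - d / m) ^ z ≤ Real.exp (-t) := by
    rw [Real.rpow_def_of_pos ha0]
    apply Real.exp_le_exp.mpr
    have := mul_le_mul_of_nonneg_left hloga hz0.le
    rw [htdef]; nlinarith
  -- Step 2: exp(-t) ≤ 1 - t/(2L)
  have hexpL : Real.exp (-L) ≤ 1 / 2 := by
    have h := Real.exp_le_exp.mpr (neg_le_neg hL)
    have he : Real.exp (-Real.log 2) = 1 / 2 := by
      rw [Real.exp_neg, Real.exp_log (by norm_num : (0:ℝ) < 2)]; norm_num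
    linarith
  have hconv : Real.exp (-t) ≤ (1 - t / L) * Real.exp 0 + (t / L) * Real.exp (-L) := by
    have hw1 : (0:ℝ) ≤ 1 - t / L := by
      have : t / L ≤ 1 := (div_le_one hLpos).mpr htL
      linarith
    have hw2 : (0:ℝ) ≤ t / L := by positivity
    have hsum : (1 - t / L) + t / L = 1 := by ring
    have := convexOn_exp.2 (Set.mem_univ (0:ℝ)) (Set.mem_univ (-L)) hw1 hw2 hsum
    have harg : (1 - t / L) • (0:ℝ) + (t / L) • (-L) = -t := by
      rw [smul_eq_mul, smul_eq_mul]; field_simp; ring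
    rwa [harg] at this
  have h2 : Real.exp (-t) ≤ 1 - t / (2 * L) := by
    rw [Real.exp_zero] at hconv
    have h3 : (t / L) * Real.exp (-L) ≤ (t / L) * (1 / 2) :=
      mul_le_mul_of_nonneg_left hexpL (by positivity)
    have : t / (2 * L) = (t / L) * (1 / 2) := by ring
    nlinarith
  -- Combine
  have hnum : t / (2 * L) ≤ 1 - (1 - d / m) ^ z := by
    have := h1.trans h2
    linarith
  have goal1 : d / (2 * L * m) ≤ (1 - (1 - d / m) ^ z) / z := by
    have : t / (2 * L) / z = d / (2 * L * m) := by
      rw [htdef]; field_simp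
    rw [← this]
    gcongr
  calc d / (2 * C * Real.log 2 * m) = d / (2 * L * m) := by rw [hLdef]; ring_nf
    _ ≤ _ := goal1
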